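/- arXiv:2506.21995 — 2 statements merged into one kernel-verified Lean document; each statement's English description precedes it below -/
import Mathlib

section
/- Let Q be a nondegenerate real quadratic form of signature (2, ρ−2) on ℝ^ρ with ρ ≥ 3, and let Q* be the dual quadratic form on (ℝ^ρ)*. For a nonzero linear functional f on ℝ^ρ, the restriction of Q to Ker f has signature (1, ρ−2) if and only if Q*(f) > 0. -/
open Submodule Module

/-- A real-valued map `Q` on a real vector space `M` has signature `(p, q)` if there is a
basis in which `Q` is the corresponding signed sum of squares of coordinates
(`p` positive and `q` negative eigenvalues). -/
def HasSignature {M : Type*} [AddCommGroup M] [Module ℝ M] (Q : M → ℝ) (p q : ℕ) : Prop :=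
  ∃ b : Module.Basis (Fin (p + q)) ℝ M,
    ∀ v : M, Q v = ∑ i : Fin (p + q), (if (i : ℕ) < p then (1 : ℝ) else -1) * b.repr v i ^ 2

/-- The symmetric bilinear form associated to a quadratic map `Q`. -/
noncomputable def polarForm {ρ : ℕ} (Q : (Fin ρ → ℝ) → ℝ) (x y : Fin ρ → ℝ) : ℝ :=
  (Q (x + y) - Q x - Q y) / 2

section Helpers

lemma cardLt (p q : ℕ) : Fintype.card {i : Fin (p + q) // (i : ℕ) < p} = p := by
  have e : {i : Fin (p + q) // (i : ℕ) < p} ≃ Fin p :=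
    { toFun := fun i => ⟨i.1, i.2⟩
      invFun := fun j => ⟨⟨j.1, by omega⟩, j.2⟩
      left_inv := fun i => by ext; rfl
      right_inv := fun j => by ext; rfl }
  rw [Fintype.card_congr e, Fintype.card_fin]

lemma cardNotLt (p q : ℕ) : Fintype.card {i : Fin (p + q) // ¬ (i : ℕ) < p} = q := by
  classical
  have h := Fintype.card_subtype_compl (fun i : Fin (p + q) => (i : ℕ) < p)
  rw [h, cardLt, Fintype.card_fin]
  omega

variable {V : Type*} [AddCommGroup V] [Module ℝ V]

lemma span_sign_nonneg {n : ℕ} (Q : V → ℝ) (bb : Basis (Fin n) ℝ V) (ε : Fin n → ℝ)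
    (hform : ∀ v, Q v = ∑ i, ε i * bb.repr v i ^ 2)
    (P : Fin n → Prop) (hε : ∀ i, P i → 0 ≤ ε i)
    {v : V} (hv : v ∈ span ℝ (bb '' {i | P i})) : 0 ≤ Q v := by
  classical
  have hsupp := (Basis.mem_span_image bb).1 hv
  have hzero : ∀ i, ¬ P i → bb.repr v i = 0 := by
    intro i hi
    by_contra h
    exact hi (hsupp (Finsupp.mem_support_iff.2 h))
  rw [hform]
  refine Finset.sum_nonneg fun i _ => ?_
  by_cases h : P i
  · exact mul_nonneg (hε i h) (sq_nonneg _)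
  · simp [hzero i h]

lemma span_sign_pos {n : ℕ} (Q : V → ℝ) (bb : Basis (Fin n) ℝ V) (ε : Fin n → ℝ)
    (hform : ∀ v, Q v = ∑ i, ε i * bb.repr v i ^ 2)
    (P : Fin n → Prop) (hε : ∀ i, P i → 0 < ε i)
    {v : V} (hv : v ∈ span ℝ (bb '' {i | P i})) (hv0 : v ≠ 0) : 0 < Q v := by
  classical
  have hsupp := (Basis.mem_span_image bb).1 hv
  have hzero : ∀ i, ¬ P i → bb.repr v i = 0 := by
    intro i hi
    by_contra h
    exact hi (hsupp (Finsupp.mem_support_iff.2 h))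
  rw [hform]
  obtain ⟨j, hj⟩ : ∃ j, bb.repr v j ≠ 0 := by
    by_contra h
    push_neg at h
    exact hv0 (bb.repr.map_eq_zero_iff.1 (Finsupp.ext h))
  have hPj : P j := by
    by_contra h
    exact hj (hzero j h)
  refine Finset.sum_pos' (fun i _ => ?_) ⟨j, Finset.mem_univ j, ?_⟩
  · by_cases h : P i
    · exact mul_nonneg (hε i h).le (sq_nonneg _)
    · simp [hzero i h]
  · exact mul_pos (hε j hPj) (lt_of_le_of_ne (sq_nonneg _) (Ne.symm (pow_ne_zero 2 hj)))

lemma span_sign_nonpos {n : ℕ} (Q : V → ℝ) (bb : Basis (Fin n) ℝ V) (ε : Fin n → ℝ)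
    (hform : ∀ v, Q v = ∑ i, ε i * bb.repr v i ^ 2)
    (P : Fin n → Prop) (hε : ∀ i, P i → ε i ≤ 0)
    {v : V} (hv : v ∈ span ℝ (bb '' {i | P i})) : Q v ≤ 0 := by
  classical
  have hsupp := (Basis.mem_span_image bb).1 hv
  have hzero : ∀ i, ¬ P i → bb.repr v i = 0 := by
    intro i hi
    by_contra h
    exact hi (hsupp (Finsupp.mem_support_iff.2 h))
  rw [hform]
  refine Finset.sum_nonpos fun i _ => ?_
  by_cases h : P i
  · exact mul_nonpos_of_nonpos_of_nonneg (hε i h) (sq_nonneg _)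
  · simp [hzero i h]

lemma finrank_span_basis_image {n : ℕ} (bb : Basis (Fin n) ℝ V) (P : Fin n → Prop)
    [DecidablePred P] :
    finrank ℝ (span ℝ (bb '' {i | P i})) = Fintype.card {i // P i} := by
  have hli : LinearIndependent ℝ (fun i : {i // P i} => bb ↑i) :=
    bb.linearIndependent.comp _ Subtype.val_injective
  have himg : bb '' {i | P i} = Set.range (fun i : {i // P i} => bb ↑i) := by
    rw [Set.image_eq_range]; rfl
  rw [himg, finrank_span_eq_card hli]

lemma posneg_finrank_le [FiniteDimensional ℝ V] (Q : V → ℝ) (P N : Submodule ℝ V)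
    (hP : ∀ v ∈ P, v ≠ 0 → 0 < Q v) (hN : ∀ v ∈ N, Q v ≤ 0) :
    finrank ℝ P + finrank ℝ N ≤ finrank ℝ V := by
  have hinf : P ⊓ N = ⊥ := by
    rw [eq_bot_iff]
    rintro v ⟨hv1, hv2⟩
    rw [Submodule.mem_bot]
    by_contra h
    exact absurd (hN v hv2) (not_le.2 (hP v hv1 h))
  calc finrank ℝ P + finrank ℝ N
      = finrank ℝ ↥(P ⊔ N) + finrank ℝ ↥(P ⊓ N) :=
        (Submodule.finrank_sup_add_finrank_inf_eq P N).symm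
    _ = finrank ℝ ↥(P ⊔ N) := by rw [hinf, finrank_bot, add_zero]
    _ ≤ finrank ℝ V := Submodule.finrank_le _

lemma sig_bound_pos [FiniteDimensional ℝ V] {p q : ℕ} (Q : V → ℝ)
    (bb : Basis (Fin (p + q)) ℝ V)
    (hform : ∀ v, Q v = ∑ i : Fin (p + q), (if (i : ℕ) < p then (1 : ℝ) else -1) * bb.repr v i ^ 2)
    (P : Submodule ℝ V) (hP : ∀ v ∈ P, v ≠ 0 → 0 < Q v) : finrank ℝ P ≤ p := by
  classical
  set N := span ℝ (bb '' {i | ¬ (i : ℕ) < p}) with hNdef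
  have hN : ∀ v ∈ N, Q v ≤ 0 := fun v hv =>
    span_sign_nonpos Q bb _ hform (fun i => ¬ (i : ℕ) < p)
      (fun i hi => by simp [hi]) hv
  have hdimN : finrank ℝ N = q := by
    rw [hNdef, finrank_span_basis_image, cardNotLt]
  have h := posneg_finrank_le Q P N hP hN
  rw [hdimN, finrank_eq_card_basis bb, Fintype.card_fin] at h
  omega

lemma sig_bound_neg [FiniteDimensional ℝ V] {p q : ℕ} (Q : V → ℝ)
    (bb : Basis (Fin (p + q)) ℝ V)
    (hform : ∀ v, Q v = ∑ i : Fin (p + q), (if (i : ℕ) < p then (1 : ℝ) else -1) * bb.repr v i ^ 2)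
    (N : Submodule ℝ V) (hN : ∀ v ∈ N, Q v ≤ 0) : finrank ℝ N ≤ q := by
  classical
  set P := span ℝ (bb '' {i | (i : ℕ) < p}) with hPdef
  have hP : ∀ v ∈ P, v ≠ 0 → 0 < Q v := fun v hv hv0 =>
    span_sign_pos Q bb _ hform (fun i => (i : ℕ) < p)
      (fun i hi => by simp [hi]) hv hv0
  have hdimP : finrank ℝ P = p := by
    rw [hPdef, finrank_span_basis_image, cardLt]
  have h := posneg_finrank_le Q P N hP hN
  rw [hdimP, finrank_eq_card_basis bb, Fintype.card_fin] at h
  omega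

lemma sort_signature {m : ℕ} (Q : V → ℝ)
    (c : Basis (Fin m) ℝ V) (v : Fin m → ℝ) (hv : ∀ i, v i = -1 ∨ v i = 1)
    (hform : ∀ x, Q x = ∑ i, v i * c.repr x i ^ 2) :
    ∃ a b, a + b = m ∧ HasSignature Q a b := by
  classical
  set a := Fintype.card {i // v i = 1} with ha
  set bq := Fintype.card {i // ¬ v i = 1} with hbq
  have hle : a ≤ m := by
    have := Fintype.card_subtype_le (fun i => v i = 1)
    rwa [Fintype.card_fin] at this
  have hab : a + bq = m := by
    rw [hbq, Fintype.card_subtype_compl, Fintype.card_fin]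
    omega
  refine ⟨a, bq, hab, ?_⟩
  have e1 : Fin a ≃ {i // v i = 1} := (Fintype.equivFinOfCardEq ha.symm).symm
  have e2 : Fin bq ≃ {i // ¬ v i = 1} := (Fintype.equivFinOfCardEq hbq.symm).symm
  set σ : Fin (a + bq) ≃ Fin m :=
    finSumFinEquiv.symm.trans ((e1.sumCongr e2).trans (Equiv.sumCompl (fun i => v i = 1)))
    with hσdef
  have hσ : ∀ j : Fin (a + bq), v (σ j) = if (j : ℕ) < a then 1 else -1 := by
    intro j
    by_cases hj : (j : ℕ) < a
    · have h1 : finSumFinEquiv.symm j = Sum.inl ⟨(j : ℕ), hj⟩ := by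
        rw [Equiv.symm_apply_eq, finSumFinEquiv_apply_left]
        ext
        rfl
      have h2 : σ j = ↑(e1 ⟨(j : ℕ), hj⟩) := by
        simp [hσdef, h1]
      rw [h2, if_pos hj]
      exact (e1 ⟨(j : ℕ), hj⟩).2
    · have hj' : (j : ℕ) - a < bq := by omega
      have h1 : finSumFinEquiv.symm j = Sum.inr ⟨(j : ℕ) - a, hj'⟩ := by
        rw [Equiv.symm_apply_eq, finSumFinEquiv_apply_right]
        ext
        simp
        omega
      have h2 : σ j = ↑(e2 ⟨(j : ℕ) - a, hj'⟩) := by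
        simp [hσdef, h1]
      rw [h2, if_neg hj]
      rcases hv ↑(e2 ⟨(j : ℕ) - a, hj'⟩) with h | h
      · exact h
      · exact absurd h (e2 ⟨(j : ℕ) - a, hj'⟩).2
  refine ⟨c.reindex σ.symm, fun x => ?_⟩
  rw [hform x, ← Equiv.sum_comp σ (fun i => v i * c.repr x i ^ 2)]
  refine Finset.sum_congr rfl fun j _ => ?_
  rw [hσ j, Basis.repr_reindex_apply, Equiv.symm_symm]

end Helpers

set_option maxHeartbeats 1000000 in
/-- `Q` has signature `(2, ρ-2)`; `w` is the vector representing the linear functional `f`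
via the associated bilinear form, so that the dual form satisfies `Q*(f) = Q(w)`.
Then `Q` restricted to `Ker f` has signature `(1, ρ-2)` iff `Q*(f) > 0`. -/
theorem stmt11 (ρ : ℕ) (hρ : 3 ≤ ρ) (Q : (Fin ρ → ℝ) → ℝ)
    (hQ : HasSignature Q 2 (ρ - 2))
    (f : (Fin ρ → ℝ) →ₗ[ℝ] ℝ) (hf : f ≠ 0)
    (w : Fin ρ → ℝ) (hw : ∀ x, polarForm Q w x = f x) :
    HasSignature (fun v : LinearMap.ker f => Q (v : Fin ρ → ℝ)) 1 (ρ - 2) ↔ 0 < Q w := by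
  classical
  obtain ⟨b, hb⟩ := hQ
  set ε : Fin (2 + (ρ - 2)) → ℝ := fun i => if (i : ℕ) < 2 then (1 : ℝ) else -1 with hεdef
  have hb' : ∀ v, Q v = ∑ i, ε i * b.repr v i ^ 2 := hb
  have hε1 : ∀ i, ε i = 1 ∨ ε i = -1 := fun i => by
    by_cases h : (i : ℕ) < 2 <;> [left; right] <;> simp only [hεdef, h, if_true, if_false, ↓reduceIte]
  have hpolar : ∀ x y, polarForm Q x y = ∑ i, ε i * (b.repr x i * b.repr y i) := by
    intro x y
    have key : Q (x + y) - Q x - Q y = 2 * ∑ i, ε i * (b.repr x i * b.repr y i) := by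
      rw [hb', hb', hb', Finset.mul_sum, ← Finset.sum_sub_distrib, ← Finset.sum_sub_distrib]
      refine Finset.sum_congr rfl fun i _ => ?_
      have h : b.repr (x + y) i = b.repr x i + b.repr y i := by
        rw [map_add]; simp
      rw [h]; ring
    show (Q (x + y) - Q x - Q y) / 2 = _
    rw [key]; ring
  have hfeq : ∀ x, f x = ∑ i, ε i * (b.repr w i * b.repr x i) := fun x => by
    rw [← hw x, hpolar]
  have hfw : f w = Q w := by
    rw [hfeq w, hb' w]
    exact Finset.sum_congr rfl fun i _ => by ring
  have hw0 : w ≠ 0 := by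
    intro h
    apply hf
    apply LinearMap.ext
    intro x
    rw [hfeq x, h]
    simp
  have hE1 : ∀ (s : ℝ) (y : Fin ρ → ℝ), Q (s • w + y) = s ^ 2 * Q w + 2 * s * f y + Q y := by
    intro s y
    have h1 : Q (s • w + y) = ∑ i, (s ^ 2 * (ε i * b.repr w i ^ 2)
        + (2 * s) * (ε i * (b.repr w i * b.repr y i)) + ε i * b.repr y i ^ 2) := by
      rw [hb']
      refine Finset.sum_congr rfl fun i _ => ?_
      have h : b.repr (s • w + y) i = s * b.repr w i + b.repr y i := by
        rw [map_add, map_smul]; simp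
      rw [h]; ring
    rw [h1, Finset.sum_add_distrib, Finset.sum_add_distrib, ← Finset.mul_sum, ← Finset.mul_sum,
      ← hb' w, ← hb' y, ← hfeq y]
  have hnd : ∀ u : Fin ρ → ℝ, (∀ y, polarForm Q u y = 0) → u = 0 := by
    intro u hu
    have hj : ∀ j, b.repr u j = 0 := by
      intro j
      have h := hu (b j)
      rw [hpolar] at h
      simp only [Basis.repr_self, Finsupp.single_apply] at h
      rw [Finset.sum_eq_single j] at h
      · rcases hε1 j with h1 | h1 <;> rw [h1] at h <;> simp at h <;> linarith [h]
      · intro i _ hij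
        simp [Ne.symm hij]
      · intro hj'
        exact absurd (Finset.mem_univ j) hj'
    exact b.repr.map_eq_zero_iff.1 (Finsupp.ext hj)
  have hdimV : finrank ℝ (Fin ρ → ℝ) = 2 + (ρ - 2) := by
    rw [finrank_eq_card_basis b, Fintype.card_fin]
  have hker : finrank ℝ (LinearMap.ker f) = 1 + (ρ - 2) := by
    obtain ⟨x, hx⟩ : ∃ x, f x ≠ 0 := by
      by_contra h
      push_neg at h
      exact hf (LinearMap.ext h)
    have hsurj : LinearMap.range f = ⊤ := by
      rw [LinearMap.range_eq_top]
      intro cc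
      exact ⟨(cc / f x) • x, by rw [map_smul, smul_eq_mul]; field_simp⟩
    have h := LinearMap.finrank_range_add_finrank_ker f
    rw [hsurj, finrank_top, finrank_self, hdimV] at h
    omega
  constructor
  · -- forward direction
    rintro ⟨c, hc⟩
    have hc' : ∀ u : LinearMap.ker f, Q ↑u
        = ∑ i : Fin (1 + (ρ - 2)), (if (i : ℕ) < 1 then (1 : ℝ) else -1) * c.repr u i ^ 2 := hc
    have hQwne : Q w ≠ 0 := by
      intro h0
      have hwker : w ∈ LinearMap.ker f := by rw [LinearMap.mem_ker, hfw, h0]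
      have hcpolar : ∀ u x : LinearMap.ker f,
          polarForm Q ↑u ↑x
            = ∑ i : Fin (1 + (ρ - 2)), (if (i : ℕ) < 1 then (1 : ℝ) else -1)
                * (c.repr u i * c.repr x i) := by
        intro u x
        show (Q (↑u + ↑x) - Q ↑u - Q ↑x) / 2 = _
        have hux : (↑u + ↑x : Fin ρ → ℝ) = ↑(u + x) := rfl
        have key : Q ↑(u + x) - Q ↑u - Q ↑x
            = 2 * ∑ i : Fin (1 + (ρ - 2)), (if (i : ℕ) < 1 then (1 : ℝ) else -1)
                * (c.repr u i * c.repr x i) := by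
          rw [hc' (u + x), hc' u, hc' x, Finset.mul_sum, ← Finset.sum_sub_distrib,
            ← Finset.sum_sub_distrib]
          refine Finset.sum_congr rfl fun i _ => ?_
          have h : c.repr (u + x) i = c.repr u i + c.repr x i := by
            rw [map_add]; simp
          rw [h]; ring
        rw [hux, key]; ring
      set u₀ : LinearMap.ker f := ⟨w, hwker⟩ with hu₀
      have hrepr0 : ∀ j, c.repr u₀ j = 0 := by
        intro j
        have h := hcpolar u₀ (c j)
        have hl : polarForm Q ↑u₀ ↑(c j) = 0 := by
          have : polarForm Q w ↑(c j) = f ↑(c j) := hw _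
          rw [hu₀]
          show polarForm Q w ↑(c j) = 0
          rw [this]
          exact (c j).2
        rw [hl] at h
        simp only [Basis.repr_self, Finsupp.single_apply] at h
        rw [eq_comm, Finset.sum_eq_single j] at h
        · by_cases hj1 : (j : ℕ) < 1 <;> simp [hj1] at h <;> [exact h; linarith [h]]
        · intro i _ hij
          simp [Ne.symm hij]
        · intro hj'
          exact absurd (Finset.mem_univ j) hj'
      have hu0 : u₀ = 0 := c.repr.map_eq_zero_iff.1 (Finsupp.ext hrepr0)
      apply hw0
      have := congrArg (fun z : LinearMap.ker f => (z : Fin ρ → ℝ)) hu0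
      simpa [hu₀] using this
    have hQwneg : ¬ Q w < 0 := by
      intro hneg
      set negM := Submodule.map (LinearMap.ker f).subtype
        (span ℝ (c '' {i | ¬ (i : ℕ) < 1})) with hnegM
      have hsub : negM ≤ LinearMap.ker f := Submodule.map_subtype_le _ _
      have hNneg : ∀ y ∈ negM, Q y ≤ 0 := by
        rintro y ⟨u, hu, rfl⟩
        exact span_sign_nonpos (fun u : LinearMap.ker f => Q ↑u) c _ hc'
          (fun i => ¬ (i : ℕ) < 1) (fun i hi => by norm_num [hi]) hu
      have hdimneg : finrank ℝ negM = ρ - 2 := by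
        rw [hnegM, Submodule.finrank_map_subtype_eq, finrank_span_basis_image, cardNotLt]
      have hN : ∀ y ∈ (span ℝ {w}) ⊔ negM, Q y ≤ 0 := by
        intro y hy
        rw [Submodule.mem_sup] at hy
        obtain ⟨x, hx, z, hz, rfl⟩ := hy
        obtain ⟨s, rfl⟩ := Submodule.mem_span_singleton.1 hx
        have hfz : f z = 0 := hsub hz
        rw [hE1 s z, hfz]
        have hz0 := hNneg z hz
        nlinarith [sq_nonneg s]
      have hinf : (span ℝ {w}) ⊓ negM = ⊥ := by
        rw [eq_bot_iff]
        rintro y ⟨hy1, hy2⟩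
        obtain ⟨s, rfl⟩ := Submodule.mem_span_singleton.1 hy1
        have h1 : f (s • w) = 0 := hsub hy2
        rw [map_smul, smul_eq_mul, hfw] at h1
        have hs : s = 0 := by
          rcases mul_eq_zero.1 h1 with h | h
          · exact h
          · exact absurd h hQwne
        rw [Submodule.mem_bot, hs, zero_smul]
      have hdimN : finrank ℝ ((span ℝ {w}) ⊔ negM : Submodule ℝ (Fin ρ → ℝ)) = 1 + (ρ - 2) := by
        have h := Submodule.finrank_sup_add_finrank_inf_eq (span ℝ {w}) negM
        rw [hinf, finrank_bot, add_zero, finrank_span_singleton hw0, hdimneg] at h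
        exact h
      have hbound := sig_bound_neg Q b hb ((span ℝ {w}) ⊔ negM) hN
      rw [hdimN] at hbound
      omega
    rcases lt_trichotomy (Q w) 0 with h | h | h
    · exact absurd h hQwneg
    · exact absurd h hQwne
    · exact h
  · -- backward direction
    intro hpos
    have hQwne : Q w ≠ 0 := ne_of_gt hpos
    have hfwne : f w ≠ 0 := by rw [hfw]; exact hQwne
    have hpadd : ∀ x y z, polarForm Q x (y + z) = polarForm Q x y + polarForm Q x z := by
      intro x y z
      rw [hpolar, hpolar, hpolar, ← Finset.sum_add_distrib]
      refine Finset.sum_congr rfl fun i _ => ?_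
      have h : b.repr (y + z) i = b.repr y i + b.repr z i := by rw [map_add]; simp
      rw [h]; ring
    have hpsmul : ∀ (s : ℝ) x y, polarForm Q x (s • y) = s * polarForm Q x y := by
      intro s x y
      rw [hpolar, hpolar, Finset.mul_sum]
      refine Finset.sum_congr rfl fun i _ => ?_
      have h : b.repr (s • y) i = s * b.repr y i := by rw [map_smul]; simp
      rw [h]; ring
    have hpsymm : ∀ x y, polarForm Q x y = polarForm Q y x := by
      intro x y
      rw [hpolar, hpolar]
      exact Finset.sum_congr rfl fun i _ => by ring
    set Qf : QuadraticForm ℝ (Fin ρ → ℝ) :=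
      ∑ i, ε i • QuadraticMap.linMulLin (b.coord i) (b.coord i) with hQfdef
    have hQfapp : ∀ v, Qf v = Q v := by
      intro v
      rw [hb' v, hQfdef]
      rw [QuadraticMap.sum_apply]
      refine Finset.sum_congr rfl fun i _ => ?_
      rw [QuadraticMap.smul_apply, QuadraticMap.linMulLin_apply, Basis.coord_apply,
        smul_eq_mul, sq]
    set Qr : QuadraticForm ℝ (LinearMap.ker f) := Qf.comp (LinearMap.ker f).subtype with hQrdef
    have hQrapp : ∀ u : LinearMap.ker f, Qr u = Q ↑u := by
      intro u
      rw [hQrdef, QuadraticMap.comp_apply, hQfapp]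
      rfl
    have hassoc : ∀ u x : LinearMap.ker f,
        QuadraticMap.associated (R := ℝ) Qr u x = polarForm Q ↑u ↑x := by
      intro u x
      have h := QuadraticMap.two_nsmul_associated ℝ Qr
      have h2 := LinearMap.congr_fun (LinearMap.congr_fun h u) x
      rw [LinearMap.smul_apply, LinearMap.smul_apply] at h2
      rw [QuadraticMap.polarBilin_apply_apply, QuadraticMap.polar] at h2
      have hcoe : (↑(u + x) : Fin ρ → ℝ) = ↑u + ↑x := rfl
      rw [hQrapp, hQrapp, hQrapp, hcoe] at h2
      have h3 : (2 : ℕ) • (QuadraticMap.associated (R := ℝ) Qr u x)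
          = 2 * (QuadraticMap.associated (R := ℝ) Qr u x) := by
        rw [nsmul_eq_mul]; norm_num
      rw [h3] at h2
      show _ = (Q (↑u + ↑x) - Q ↑u - Q ↑x) / 2
      linarith [h2]
    have hsep : (QuadraticMap.associated (R := ℝ) Qr).SeparatingLeft := by
      intro u hu
      have hcoe : (↑u : Fin ρ → ℝ) = 0 := by
        apply hnd
        intro z
        set s := f z / f w with hs
        set y := z - s • w with hy
        have hyker : y ∈ LinearMap.ker f := by
          rw [LinearMap.mem_ker, hy, map_sub, map_smul, smul_eq_mul, hs,
            div_mul_cancel₀ _ hfwne, sub_self]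
        have hz : z = s • w + y := by rw [hy]; abel
        rw [hz, hpadd, hpsmul]
        have h1 : polarForm Q ↑u w = 0 := by
          rw [hpsymm, hw ↑u]
          exact u.2
        have h2 : polarForm Q ↑u y = 0 := by
          rw [← hassoc u ⟨y, hyker⟩]
          exact hu ⟨y, hyker⟩
        rw [h1, h2]
        ring
      exact Subtype.ext hcoe
    obtain ⟨vs, hvs, hequiv⟩ := QuadraticForm.equivalent_one_neg_one_weighted_sum_squared Qr hsep
    obtain ⟨iso⟩ := hequiv
    have hQform : ∀ u : LinearMap.ker f, Q ↑u = ∑ i, vs i * (iso u i) ^ 2 := by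
      intro u
      rw [← hQrapp u, ← iso.map_app u, QuadraticMap.weightedSumSquares_apply]
      exact Finset.sum_congr rfl fun i _ => by rw [smul_eq_mul, sq]
    set c₀ : Basis (Fin (finrank ℝ (LinearMap.ker f))) ℝ (LinearMap.ker f) :=
      (Pi.basisFun ℝ (Fin (finrank ℝ (LinearMap.ker f)))).map iso.toLinearEquiv.symm with hc₀def
    have hc₀repr : ∀ (u : LinearMap.ker f) i, c₀.repr u i = iso u i := by
      intro u i
      rw [hc₀def]
      simp [Basis.map_repr]
      rfl
    have hform' : ∀ u : LinearMap.ker f, Q ↑u = ∑ i, vs i * c₀.repr u i ^ 2 := by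
      intro u
      rw [hQform u]
      exact Finset.sum_congr rfl fun i _ => by rw [hc₀repr]
    obtain ⟨a, bq, habq, hsig⟩ :=
      sort_signature (fun u : LinearMap.ker f => Q ↑u) c₀ vs hvs hform'
    have hsig' := hsig
    obtain ⟨cS, hcS⟩ := hsig'
    set negM := Submodule.map (LinearMap.ker f).subtype
      (span ℝ (cS '' {i | ¬ (i : ℕ) < a})) with hnegM
    have hNneg : ∀ y ∈ negM, Q y ≤ 0 := by
      rintro y ⟨u, hu, rfl⟩
      exact span_sign_nonpos (fun u : LinearMap.ker f => Q ↑u) cS _ hcS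
        (fun i => ¬ (i : ℕ) < a) (fun i hi => by norm_num [hi]) hu
    have hdimneg : finrank ℝ negM = bq := by
      rw [hnegM, Submodule.finrank_map_subtype_eq, finrank_span_basis_image, cardNotLt]
    have hbq : bq ≤ ρ - 2 := by
      have h := sig_bound_neg Q b hb negM hNneg
      rw [hdimneg] at h
      exact h
    set posM := Submodule.map (LinearMap.ker f).subtype
      (span ℝ (cS '' {i | (i : ℕ) < a})) with hposM
    have hsubpos : posM ≤ LinearMap.ker f := Submodule.map_subtype_le _ _
    have hpos' : ∀ y ∈ posM, (0 ≤ Q y) ∧ (y ≠ 0 → 0 < Q y) := by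
      rintro y ⟨u, hu, rfl⟩
      constructor
      · exact span_sign_nonneg (fun u : LinearMap.ker f => Q ↑u) cS _ hcS
          (fun i => (i : ℕ) < a) (fun i hi => by norm_num [hi]) hu
      · intro hy0
        have hu0 : u ≠ 0 := by
          intro h
          apply hy0
          rw [h]
          rfl
        exact span_sign_pos (fun u : LinearMap.ker f => Q ↑u) cS _ hcS
          (fun i => (i : ℕ) < a) (fun i hi => by norm_num [hi]) hu hu0
    have hPpos : ∀ y ∈ (span ℝ {w}) ⊔ posM, y ≠ 0 → 0 < Q y := by
      intro y hy hy0
      rw [Submodule.mem_sup] at hy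
      obtain ⟨x, hx, z, hz, rfl⟩ := hy
      obtain ⟨s, rfl⟩ := Submodule.mem_span_singleton.1 hx
      have hfz : f z = 0 := hsubpos hz
      obtain ⟨hz0, hz1⟩ := hpos' z hz
      rw [hE1 s z, hfz]
      by_cases hs : s = 0
      · subst hs
        simp only [zero_smul, zero_add] at hy0
        have := hz1 hy0
        nlinarith
      · have hs2 : 0 < s ^ 2 := lt_of_le_of_ne (sq_nonneg s) (Ne.symm (pow_ne_zero 2 hs))
        nlinarith
    have hinfpos : (span ℝ {w}) ⊓ posM = ⊥ := by
      rw [eq_bot_iff]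
      rintro y ⟨hy1, hy2⟩
      obtain ⟨s, rfl⟩ := Submodule.mem_span_singleton.1 hy1
      have h1 : f (s • w) = 0 := hsubpos hy2
      rw [map_smul, smul_eq_mul, hfw] at h1
      have hs : s = 0 := by
        rcases mul_eq_zero.1 h1 with h | h
        · exact h
        · exact absurd h hQwne
      rw [Submodule.mem_bot, hs, zero_smul]
    have hdimpos : finrank ℝ posM = a := by
      rw [hposM, Submodule.finrank_map_subtype_eq, finrank_span_basis_image, cardLt]
    have hdimP : finrank ℝ ((span ℝ {w}) ⊔ posM : Submodule ℝ (Fin ρ → ℝ)) = 1 + a := by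
      have h := Submodule.finrank_sup_add_finrank_inf_eq (span ℝ {w}) posM
      rw [hinfpos, finrank_bot, add_zero, finrank_span_singleton hw0, hdimpos] at h
      exact h
    have ha : 1 + a ≤ 2 := by
      have h := sig_bound_pos Q b hb ((span ℝ {w}) ⊔ posM) hPpos
      rw [hdimP] at h
      exact h
    have hm : a + bq = 1 + (ρ - 2) := by rw [habq, hker]
    obtain rfl : a = 1 := by omega
    obtain rfl : bq = ρ - 2 := by omega
    exact hsig
end

section
/- Let ρ ≥ 3 and let h, f₁, f₂ be linearly independent linear functionals on ℝ^ρ. Let d > 0 and define M_d := {v ∈ ℝ^ρ : f₁(v)·f₂(v) < 0, h(v)² − d·f₁(v)² < 0, h(v)² − d·f₂(v)² < 0}. Let Q be a quadratic form of signature (2, ρ−2) that is negative definite on Ker h ∩ Ker f₁. Then for every N > 0, there exists a quadratic form Q̃ of signature (2, ρ−2) such that: Ker h ∩ (⋃_{0 ≤ t ≤ N} Ker(f₁ + t·f₂)) ⊆ neg(Q̃) ⊆ M_d ∪ neg(Q), where neg(R) := {v : R(v) < 0} ∪ {0}. -/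
open Filter Topology Module

lemma hasSig_aux {M : Type*} [AddCommGroup M] [Module ℝ M] [FiniteDimensional ℝ M]
    (p q : ℕ) (hdim : Module.finrank ℝ M = p + q)
    (ψ : Fin (p + q) → (M →ₗ[ℝ] ℝ))
    (hsep : ∀ v : M, (∀ i, ψ i v = 0) → v = 0) :
    ∃ b : Basis (Fin (p + q)) ℝ M, ∀ v : M, ∀ i, b.repr v i = ψ i v := by
  have hinj : Function.Injective (LinearMap.pi ψ : M →ₗ[ℝ] (Fin (p+q) → ℝ)) := by
    rw [← LinearMap.ker_eq_bot, Submodule.eq_bot_iff]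
    intro v hv
    exact hsep v fun i => congrFun hv i
  have hd2 : Module.finrank ℝ M = Module.finrank ℝ (Fin (p+q) → ℝ) := by
    rw [Module.finrank_fin_fun, hdim]
  let e := (LinearMap.pi ψ).linearEquivOfInjective hinj hd2
  let b : Basis (Fin (p+q)) ℝ M :=
    Basis.ofRepr (e.trans (Finsupp.linearEquivFunOnFinite ℝ ℝ (Fin (p+q))).symm)
  refine ⟨b, fun v i => ?_⟩
  show ((Finsupp.linearEquivFunOnFinite ℝ ℝ (Fin (p+q))).symm (e v)) i = ψ i v
  simp [e, Finsupp.linearEquivFunOnFinite]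

lemma aux_abs_le {x η : ℝ} (hη : 0 < η) (hx : x^2 ≤ η^2) : |x| ≤ η := by
  nlinarith [sq_abs x, abs_nonneg x, sq_nonneg (|x| - η)]

lemma aux_alg1 {a b N ε : ℝ} (hff : 0 ≤ a * b) (hN : 0 < N)
    (hG : (a + (N/2)*b)^2 - (N/2+ε)^2*b^2 ≤ 0) : a^2 ≤ ε*(N+ε)*b^2 := by
  nlinarith [mul_nonneg hN.le hff]

lemma aux_sq_bound {x C : ℝ} (hx : |x| ≤ C) (hC : 0 ≤ C) : x^2 ≤ (C+1)^2 := by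
  nlinarith [sq_abs x, abs_nonneg x]

lemma aux_alg2 {t' N ε : ℝ} (h0 : 0 ≤ t') (hN : t' ≤ N) (hε : 0 < ε) (hNp : 0 < N) :
    (N/2 - t')^2 < (N/2 + ε)^2 := by nlinarith

lemma aux_zero {x d : ℝ} (hd : 0 < d) (h : d*x^2 ≤ 0) : x = 0 := by
  have h1 : x^2 ≤ 0 := by nlinarith
  have h2 := le_antisymm h1 (sq_nonneg x)
  exact pow_eq_zero_iff two_ne_zero |>.mp h2

lemma aux_sqz {x : ℝ} (h : x^2 ≤ 0) : x = 0 :=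
  pow_eq_zero_iff two_ne_zero |>.mp (le_antisymm h (sq_nonneg x))

set_option maxHeartbeats 2000000 in
theorem stmt13 (ρ : ℕ) (hρ : 3 ≤ ρ)
    (h f₁ f₂ : (Fin ρ → ℝ) →ₗ[ℝ] ℝ) (hind : LinearIndependent ℝ ![h, f₁, f₂])
    (d : ℝ) (hd : 0 < d)
    (Q : (Fin ρ → ℝ) → ℝ) (hQ : HasSignature Q 2 (ρ - 2))
    (hneg : ∀ v : Fin ρ → ℝ, h v = 0 → f₁ v = 0 → v ≠ 0 → Q v < 0) :
    ∀ N : ℝ, 0 < N → ∃ Qt : (Fin ρ → ℝ) → ℝ, HasSignature Qt 2 (ρ - 2) ∧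
      ({v : Fin ρ → ℝ | h v = 0} ∩
          ⋃ t ∈ Set.Icc (0 : ℝ) N, {v : Fin ρ → ℝ | f₁ v + t * f₂ v = 0}) ⊆
        ({v : Fin ρ → ℝ | Qt v < 0} ∪ {0}) ∧
      ({v : Fin ρ → ℝ | Qt v < 0} ∪ {0}) ⊆
        ({v : Fin ρ → ℝ |
            f₁ v * f₂ v < 0 ∧ (h v) ^ 2 - d * (f₁ v) ^ 2 < 0 ∧
              (h v) ^ 2 - d * (f₂ v) ^ 2 < 0} ∪
          ({v : Fin ρ → ℝ | Q v < 0} ∪ {0})) := by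
  intro N hN
  obtain ⟨b, hb⟩ := hQ
  -- continuity of Q
  have hQcont : Continuous Q := by
    have hQeq : Q = fun v => ∑ i : Fin (2 + (ρ-2)),
        (if (i : ℕ) < 2 then (1 : ℝ) else -1) * b.repr v i ^ 2 := funext hb
    rw [hQeq]
    refine continuous_finset_sum _ fun i _ => Continuous.mul continuous_const ?_
    have := (b.coord i).continuous_of_finiteDimensional
    exact (continuous_pow 2).comp this
  -- homogeneity of Q
  have hQhom : ∀ (c : ℝ) (v : Fin ρ → ℝ), Q (c • v) = c ^ 2 * Q v := by
    intro c v
    rw [hb, hb, Finset.mul_sum]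
    refine Finset.sum_congr rfl fun i _ => ?_
    rw [map_smul, Finsupp.smul_apply, smul_eq_mul]
    ring
  -- Lemma A: uniform negativity near Ker h ∩ Ker f₁ on the sphere
  have lemA : ∃ η > 0, ∀ v : Fin ρ → ℝ, ‖v‖ = 1 → |h v| ≤ η → |f₁ v| ≤ η → Q v < 0 := by
    by_contra hcon
    push_neg at hcon
    have hex : ∀ n : ℕ, ∃ v : Fin ρ → ℝ, ‖v‖ = 1 ∧ |h v| ≤ 1/((n:ℝ)+1) ∧ |f₁ v| ≤ 1/((n:ℝ)+1)
        ∧ 0 ≤ Q v := by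
      intro n
      obtain ⟨v, h1, h2, h3, h4⟩ := hcon (1/((n:ℝ)+1)) (by positivity)
      exact ⟨v, h1, h2, h3, h4⟩
    choose v hv1 hv2 hv3 hv4 using hex
    have hsph : ∀ n, v n ∈ Metric.sphere (0 : Fin ρ → ℝ) 1 := by
      intro n; simpa [mem_sphere_iff_norm] using hv1 n
    obtain ⟨u, hu, φ, hφ, hφt⟩ := (isCompact_sphere (0 : Fin ρ → ℝ) 1).tendsto_subseq hsph
    have hun : ‖u‖ = 1 := by simpa [mem_sphere_iff_norm] using hu
    have hbound : Tendsto (fun n : ℕ => 1/((n:ℝ)+1)) atTop (𝓝 0) :=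
      tendsto_one_div_add_atTop_nhds_zero_nat
    have key0 : ∀ (g : (Fin ρ → ℝ) →ₗ[ℝ] ℝ), (∀ n, |g (v n)| ≤ 1/((n:ℝ)+1)) → g u = 0 := by
      intro g hg
      have hgc : Tendsto (fun n => g (v (φ n))) atTop (𝓝 (g u)) :=
        (g.continuous_of_finiteDimensional.tendsto u).comp hφt
      have habs : Tendsto (fun n => |g (v (φ n))|) atTop (𝓝 0) := by
        refine squeeze_zero (fun n => abs_nonneg _) (fun n => le_trans (hg (φ n)) ?_) hbound
        have h1 : n ≤ φ n := hφ.le_apply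
        have : (n:ℝ) ≤ (φ n : ℝ) := Nat.cast_le.mpr h1
        exact one_div_le_one_div_of_le (by positivity) (by linarith)
      exact abs_eq_zero.mp (tendsto_nhds_unique hgc.abs habs)
    have hhu : h u = 0 := key0 h hv2
    have hf1u : f₁ u = 0 := key0 f₁ hv3
    have hQu : 0 ≤ Q u :=
      ge_of_tendsto' ((hQcont.tendsto u).comp hφt) fun n => hv4 (φ n)
    have := hneg u hhu hf1u (by intro h0; rw [h0] at hun; simp at hun)
    linarith
  obtain ⟨η, hη, hηQ⟩ := lemA
  -- bounds for linear functionals on the unit sphere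
  have hbnd : ∀ g : (Fin ρ → ℝ) →ₗ[ℝ] ℝ, ∃ C, 0 ≤ C ∧ ∀ v : Fin ρ → ℝ, ‖v‖ = 1 → |g v| ≤ C := by
    intro g
    refine ⟨‖LinearMap.toContinuousLinearMap g‖, norm_nonneg _, fun v hv => ?_⟩
    have := (LinearMap.toContinuousLinearMap g).le_opNorm v
    rw [hv, mul_one] at this
    simpa [Real.norm_eq_abs] using this
  obtain ⟨C₂, hC₂0, hC₂⟩ := hbnd f₂
  -- choice of ε
  set ε : ℝ := min 1 (η^2 / ((N+1) * (C₂+1)^2)) with hεdef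
  have hε : 0 < ε := by
    apply lt_min one_pos
    positivity
  have hε1 : ε ≤ 1 := min_le_left _ _
  have keyε : ε * (N + ε) * (C₂+1)^2 ≤ η^2 := by
    have h1 : ε ≤ η^2 / ((N+1) * (C₂+1)^2) := min_le_right _ _
    have h2 : ε * ((N+1) * (C₂+1)^2) ≤ η^2 := by
      rw [← le_div_iff₀ (by positivity)]
      exact h1
    nlinarith [sq_nonneg (C₂+1), hε.le]
  -- dimension of W
  set P : (Fin ρ → ℝ) →ₗ[ℝ] (Fin 3 → ℝ) := LinearMap.pi ![h, f₁, f₂] with hP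
  have hPsurj : Function.Surjective P := by
    rw [← LinearMap.range_eq_top]
    by_contra hne
    obtain ⟨x, hx⟩ : ∃ x, x ∉ LinearMap.range P := by
      by_contra h'; push_neg at h'
      exact hne (eq_top_iff.2 fun x _ => h' x)
    obtain ⟨ξ, hξx, hξ⟩ := (LinearMap.range P).exists_dual_map_eq_bot_of_notMem hx inferInstance
    set c : Fin 3 → ℝ := fun i => ξ (Pi.single i 1) with hc
    have hξy : ∀ y : Fin 3 → ℝ, ξ y = ∑ i, y i * c i := by
      intro y
      have hy : y = ∑ i, y i • (Pi.single i (1:ℝ) : Fin 3 → ℝ) := by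
        ext j; simp [Pi.single_apply]
      conv_lhs => rw [hy]
      rw [map_sum]
      simp [hc]
    have hzero : ∀ v, ξ (P v) = 0 := by
      intro v
      have hmem : ξ (P v) ∈ Submodule.map ξ (LinearMap.range P) :=
        Submodule.mem_map_of_mem (LinearMap.mem_range_self P v)
      rw [hξ] at hmem
      simpa using hmem
    have hlin := Fintype.linearIndependent_iff.mp hind c
    have hsum : ∑ i, c i • ![h, f₁, f₂] i = 0 := by
      apply LinearMap.ext
      intro v
      have := hzero v
      rw [hξy] at this
      simpa [hP, LinearMap.pi_apply, mul_comm] using this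
    have hc0 : ∀ i, c i = 0 := hlin hsum
    apply hξx
    rw [hξy]
    simp [hc0]
  have hkerW : LinearMap.ker P = LinearMap.ker h ⊓ LinearMap.ker f₁ ⊓ LinearMap.ker f₂ := by
    ext v
    simp only [LinearMap.mem_ker, Submodule.mem_inf, hP, LinearMap.pi_apply]
    constructor
    · intro hv
      refine ⟨⟨?_, ?_⟩, ?_⟩
      · simpa using congrFun hv 0
      · simpa using congrFun hv 1
      · simpa using congrFun hv 2
    · rintro ⟨⟨h0, h1⟩, h2⟩
      ext i
      fin_cases i <;> simp [h0, h1, h2]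
  have hrk := LinearMap.finrank_range_add_finrank_ker P
  rw [LinearMap.range_eq_top.2 hPsurj, finrank_top, Module.finrank_fin_fun, Module.finrank_fin_fun,
    hkerW] at hrk
  have hk : finrank ℝ ↥(LinearMap.ker h ⊓ LinearMap.ker f₁ ⊓ LinearMap.ker f₂) = ρ - 3 := by omega
  -- the subspace W and the auxiliary functionals
  set W := LinearMap.ker h ⊓ LinearMap.ker f₁ ⊓ LinearMap.ker f₂ with hW
  set g₁ : (Fin ρ → ℝ) →ₗ[ℝ] ℝ := f₁ + (N/2) • f₂ with hg₁
  set β : ℝ := N/2 + ε with hβ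
  have hβpos : 0 < β := by positivity
  obtain ⟨U, hU⟩ := Submodule.exists_isCompl W
  set π := W.linearProjOfIsCompl U hU with hπ
  set κ : Basis (Fin (ρ - 3)) ℝ W := (Module.finBasis ℝ W).reindex (finCongr hk) with hκ
  set χ : Fin (ρ - 3) → ((Fin ρ → ℝ) →ₗ[ℝ] ℝ) := fun j => (κ.coord j).comp π with hχ
  have hχW : ∀ w, w ∈ W → (∀ j, χ j w = 0) → w = 0 := by
    intro w hw hz
    have hπw : π w = ⟨w, hw⟩ := Submodule.linearProjOfIsCompl_apply_left hU ⟨w, hw⟩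
    have : (⟨w, hw⟩ : W) = 0 := by
      rw [← κ.forall_coord_eq_zero_iff]
      intro j
      have := hz j
      rwa [hχ, LinearMap.comp_apply, hπw] at this
    simpa using congrArg Subtype.val this
  set E : (Fin ρ → ℝ) → ℝ := fun v => ∑ j, (χ j v)^2 with hE
  have hE0 : ∀ v, 0 ≤ E v := fun v => Finset.sum_nonneg fun j _ => sq_nonneg _
  have hEsmul : ∀ (c : ℝ) v, E (c • v) = c^2 * E v := by
    intro c v
    rw [hE]
    simp only [map_smul, smul_eq_mul, Finset.mul_sum]
    exact Finset.sum_congr rfl fun j _ => by ring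
  have hEpos : ∀ w, w ∈ W → w ≠ 0 → 0 < E w := by
    intro w hw hne
    obtain ⟨j, hj⟩ : ∃ j, χ j w ≠ 0 := by
      by_contra h'; push_neg at h'; exact hne (hχW w hw h')
    have h1 : (χ j w)^2 ≤ E w := Finset.single_le_sum (f := fun j => (χ j w)^2)
      (fun j _ => sq_nonneg _) (Finset.mem_univ j)
    have h2 : 0 < (χ j w)^2 := sq_pos_of_ne_zero hj
    linarith
  -- further bounds on the sphere
  obtain ⟨Cg, hCg0, hCg⟩ := hbnd g₁
  obtain ⟨CE, hCE0, hCEb⟩ : ∃ C, 0 ≤ C ∧ ∀ v : Fin ρ → ℝ, ‖v‖ = 1 → E v ≤ C := by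
    choose D hD0 hD using fun j => hbnd (χ j)
    refine ⟨∑ j, (D j)^2, Finset.sum_nonneg fun j _ => sq_nonneg _, fun v hv => ?_⟩
    refine Finset.sum_le_sum fun j _ => ?_
    have := hD j v hv
    nlinarith [abs_nonneg (χ j v), sq_abs (χ j v)]
  set Ctot : ℝ := Cg^2 + β^2*C₂^2 + CE + 1 with hCtot
  have hCtot0 : 0 < Ctot := by positivity
  -- the signature construction, for arbitrary positive parameters
  have key : ∀ A l dlt : ℝ, 0 < A → 0 < l → 0 < dlt → ∃ Qt : (Fin ρ → ℝ) → ℝ,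
      (∀ v, Qt v = A*(h v)^2 + l*(g₁ v)^2 - l*β^2*(f₂ v)^2 - dlt * E v) ∧
      HasSignature Qt 2 (ρ - 2) := by
    intro A l dlt hA hl hdlt
    set ψ : Fin (2 + (ρ-2)) → ((Fin ρ → ℝ) →ₗ[ℝ] ℝ) := fun i =>
      if h0 : (i : ℕ) = 0 then Real.sqrt A • h
      else if h1 : (i : ℕ) = 1 then Real.sqrt l • g₁
      else if h2 : (i : ℕ) = 2 then (Real.sqrt l * β) • f₂
      else Real.sqrt dlt • χ ⟨(i : ℕ) - 3, by have h3 := i.isLt; omega⟩ with hψ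
    have hdim : finrank ℝ (Fin ρ → ℝ) = 2 + (ρ - 2) := by
      rw [Module.finrank_fin_fun]; omega
    have hsA : Real.sqrt A ≠ 0 := by positivity
    have hsl : Real.sqrt l ≠ 0 := by positivity
    have hsd : Real.sqrt dlt ≠ 0 := by positivity
    have hsep : ∀ v : Fin ρ → ℝ, (∀ i, ψ i v = 0) → v = 0 := by
      intro v hv
      have h0 : h v = 0 := by
        have e0 := hv ⟨0, by omega⟩
        have : Real.sqrt A * h v = 0 := by simpa [hψ] using e0
        exact ((mul_eq_zero.mp this).resolve_left hsA)
      have h1 : g₁ v = 0 := by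
        have e0 := hv ⟨1, by omega⟩
        have : Real.sqrt l * g₁ v = 0 := by simpa [hψ] using e0
        exact ((mul_eq_zero.mp this).resolve_left hsl)
      have h2 : f₂ v = 0 := by
        have e0 := hv ⟨2, by omega⟩
        have : Real.sqrt l * β * f₂ v = 0 := by simpa [hψ] using e0
        have hne : Real.sqrt l * β ≠ 0 := mul_ne_zero hsl (ne_of_gt hβpos)
        exact ((mul_eq_zero.mp this).resolve_left hne)
      have hf1 : f₁ v = 0 := by
        have hgv : g₁ v = f₁ v + (N/2) * f₂ v := by simp [hg₁]
        rw [h1, h2] at hgv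
        linarith
      have hvW : v ∈ W := by
        rw [hW]
        exact ⟨⟨h0, hf1⟩, h2⟩
      apply hχW v hvW
      intro j
      have hj3 : (j : ℕ) + 3 < 2 + (ρ - 2) := by have := j.isLt; omega
      have e0 := hv ⟨(j : ℕ) + 3, hj3⟩
      have hjeq : (⟨(j : ℕ) + 3 - 3, by have := j.isLt; omega⟩ :
          Fin (ρ - 3)) = j := by
        apply Fin.ext; simp
      have : Real.sqrt dlt * χ j v = 0 := by
        have : Real.sqrt dlt * χ ⟨(j : ℕ) + 3 - 3, by have := j.isLt; omega⟩ v = 0 := by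
          simpa [hψ] using e0
        rwa [hjeq] at this
      exact ((mul_eq_zero.mp this).resolve_left hsd)
    obtain ⟨bb, hbb⟩ := hasSig_aux 2 (ρ - 2) hdim ψ hsep
    have e3 : 3 + (ρ - 3) = 2 + (ρ - 2) := by omega
    set e : Fin 3 ⊕ Fin (ρ - 3) ≃ Fin (2 + (ρ - 2)) := finSumFinEquiv.trans (finCongr e3) with he
    have hinr : ∀ j : Fin (ρ - 3), ((e (Sum.inr j)) : ℕ) = 3 + (j : ℕ) := by
      intro j; simp [he, finCongr_apply]
    have h00 : ((e (Sum.inl (0 : Fin 3))) : ℕ) = 0 := by simp [he, finCongr_apply]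
    have h01 : ((e (Sum.inl (1 : Fin 3))) : ℕ) = 1 := by simp [he, finCongr_apply]
    have h02 : ((e (Sum.inl (2 : Fin 3))) : ℕ) = 2 := by simp [he, finCongr_apply]
    have hsA2 : Real.sqrt A ^ 2 = A := Real.sq_sqrt hA.le
    have hsl2 : Real.sqrt l ^ 2 = l := Real.sq_sqrt hl.le
    have hsd2 : Real.sqrt dlt ^ 2 = dlt := Real.sq_sqrt hdlt.le
    have t0 : ∀ v, ψ (e (Sum.inl 0)) v = Real.sqrt A * h v := by
      intro v; simp only [hψ]; rw [dif_pos h00]; simp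
    have t1 : ∀ v, ψ (e (Sum.inl 1)) v = Real.sqrt l * g₁ v := by
      intro v; simp only [hψ]
      rw [dif_neg (by rw [h01]; omega), dif_pos h01]; simp
    have t2 : ∀ v, ψ (e (Sum.inl 2)) v = Real.sqrt l * β * f₂ v := by
      intro v; simp only [hψ]
      rw [dif_neg (by rw [h02]; omega), dif_neg (by rw [h02]; omega), dif_pos h02]; simp
    have tinr : ∀ (j : Fin (ρ - 3)) v, ψ (e (Sum.inr j)) v = Real.sqrt dlt * χ j v := by
      intro j v; simp only [hψ]
      rw [dif_neg (by rw [hinr j]; omega), dif_neg (by rw [hinr j]; omega),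
        dif_neg (by rw [hinr j]; omega)]
      simp only [LinearMap.smul_apply, smul_eq_mul]
      congr 2
      refine congrArg χ (Fin.ext ?_)
      show ((e (Sum.inr j)) : ℕ) - 3 = (j : ℕ)
      rw [hinr j]
      omega
    refine ⟨fun v => ∑ i : Fin (2 + (ρ - 2)), (if (i : ℕ) < 2 then (1:ℝ) else -1) * (ψ i v)^2,
      ?_, ⟨bb, ?_⟩⟩
    · intro v
      show (∑ i : Fin (2 + (ρ - 2)), (if (i : ℕ) < 2 then (1:ℝ) else -1) * (ψ i v)^2) = _
      rw [show (∑ i : Fin (2 + (ρ - 2)), (if (i : ℕ) < 2 then (1:ℝ) else -1) * (ψ i v)^2)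
          = ∑ x : Fin 3 ⊕ Fin (ρ - 3), (if ((e x) : ℕ) < 2 then (1:ℝ) else -1) * (ψ (e x) v)^2
        from (Fintype.sum_equiv e _ _ (fun x => rfl)).symm]
      rw [Fintype.sum_sum_type, Fin.sum_univ_three]
      have hsum3 : ∑ j : Fin (ρ - 3),
          (if ((e (Sum.inr j)) : ℕ) < 2 then (1:ℝ) else -1) * (ψ (e (Sum.inr j)) v)^2
          = -(dlt * E v) := by
        have step : ∀ j : Fin (ρ - 3),
            (if ((e (Sum.inr j)) : ℕ) < 2 then (1:ℝ) else -1) * (ψ (e (Sum.inr j)) v)^2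
            = -(dlt * (χ j v)^2) := by
          intro j
          rw [if_neg (by rw [hinr j]; omega), tinr j, mul_pow, hsd2]
          ring
        rw [Finset.sum_congr rfl fun j _ => step j, hE, Finset.mul_sum]
        rw [← Finset.sum_neg_distrib]
      rw [hsum3, if_pos (by rw [h00]; omega), if_pos (by rw [h01]; omega),
        if_neg (by rw [h02]; omega), t0, t1, t2]
      simp only [mul_pow, hsA2, hsl2]
      ring
    · intro v
      show (∑ i : Fin (2 + (ρ - 2)), (if (i : ℕ) < 2 then (1:ℝ) else -1) * (ψ i v)^2) = _
      refine Finset.sum_congr rfl fun i _ => ?_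
      rw [hbb v i]
  clear_value Ctot E χ κ π g₁ β ε
  -- the main compactness argument: choice of parameters
  have main : ∃ t : ℝ, 0 < t ∧ ∀ v : Fin ρ → ℝ, ‖v‖ = 1 →
      t*(h v)^2 + (1/t)*(g₁ v)^2 - (1/t)*β^2*(f₂ v)^2 - (1/t^3) * E v < 0 →
      (0 ≤ f₁ v * f₂ v ∨ d*(f₁ v)^2 ≤ (h v)^2 ∨ d*(f₂ v)^2 ≤ (h v)^2) → Q v < 0 := by
    by_contra hcon
    push_neg at hcon
    have hex : ∀ n : ℕ, ∃ v : Fin ρ → ℝ, ‖v‖ = 1 ∧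
        (((n:ℝ)+1)*(h v)^2 + (1/((n:ℝ)+1))*(g₁ v)^2 - (1/((n:ℝ)+1))*β^2*(f₂ v)^2
          - (1/((n:ℝ)+1)^3) * E v < 0) ∧
        (0 ≤ f₁ v * f₂ v ∨ d*(f₁ v)^2 ≤ (h v)^2 ∨ d*(f₂ v)^2 ≤ (h v)^2) ∧ 0 ≤ Q v := by
      intro n
      obtain ⟨v, h1, h2, h3, h4⟩ := hcon ((n:ℝ)+1) (by positivity)
      exact ⟨v, h1, h2, h3, h4⟩
    choose s hs1 hs2 hs3 hs4 using hex
    have hsph : ∀ n, s n ∈ Metric.sphere (0 : Fin ρ → ℝ) 1 := by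
      intro n; simpa [mem_sphere_iff_norm] using hs1 n
    obtain ⟨u, hu, φ, hφ, hφt⟩ := (isCompact_sphere (0 : Fin ρ → ℝ) 1).tendsto_subseq hsph
    have hun : ‖u‖ = 1 := by simpa [mem_sphere_iff_norm] using hu
    have hune : u ≠ 0 := by intro h0; rw [h0] at hun; simp at hun
    -- cleared-denominator inequality
    have hs2' : ∀ n : ℕ, ((n:ℝ)+1)^4*(h (s n))^2 + ((n:ℝ)+1)^2*(g₁ (s n))^2
        - ((n:ℝ)+1)^2*β^2*(f₂ (s n))^2 - E (s n) < 0 := by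
      intro n
      have ht : (0:ℝ) < (n:ℝ)+1 := by positivity
      have h2 := hs2 n
      have h3 := mul_lt_mul_of_pos_left h2 (by positivity : (0:ℝ) < ((n:ℝ)+1)^3)
      rw [mul_zero] at h3
      calc ((n:ℝ)+1)^4*(h (s n))^2 + ((n:ℝ)+1)^2*(g₁ (s n))^2
            - ((n:ℝ)+1)^2*β^2*(f₂ (s n))^2 - E (s n)
          = ((n:ℝ)+1)^3 * (((n:ℝ)+1)*(h (s n))^2 + (1/((n:ℝ)+1))*(g₁ (s n))^2
            - (1/((n:ℝ)+1))*β^2*(f₂ (s n))^2 - (1/((n:ℝ)+1)^3) * E (s n)) := by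
            field_simp
        _ < 0 := h3
    -- quantitative bounds
    have hball : ∀ n : ℕ, (h (s n))^2 * ((n:ℝ)+1)^2 ≤ Ctot ∧
        (g₁ (s n))^2 - β^2*(f₂ (s n))^2 ≤ Ctot/((n:ℝ)+1)^2 := by
      intro n
      have ht : (0:ℝ) < (n:ℝ)+1 := by positivity
      have ht1 : (1:ℝ) ≤ ((n:ℝ)+1)^2 := by nlinarith [Nat.cast_nonneg (α := ℝ) n]
      have hf2b : (f₂ (s n))^2 ≤ C₂^2 := by
        have := hC₂ (s n) (hs1 n)
        nlinarith [abs_nonneg (f₂ (s n)), sq_abs (f₂ (s n))]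
      have hEb : E (s n) ≤ CE := hCEb (s n) (hs1 n)
      have hE0' : 0 ≤ E (s n) := hE0 (s n)
      have hkey := hs2' n
      constructor
      · -- (h (s n))^2 * t^2 ≤ Ctot
        have hmulf2 : ((n:ℝ)+1)^2*β^2*(f₂ (s n))^2 ≤ ((n:ℝ)+1)^2*β^2*C₂^2 :=
          mul_le_mul_of_nonneg_left hf2b (by positivity)
        have hg2 : 0 ≤ ((n:ℝ)+1)^2*(g₁ (s n))^2 := by positivity
        have h1 : ((n:ℝ)+1)^4*(h (s n))^2 ≤ ((n:ℝ)+1)^2*β^2*C₂^2 + CE := by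
          linarith only [hkey, hmulf2, hg2, hEb]
        have h2 : ((n:ℝ)+1)^4*(h (s n))^2 ≤ ((n:ℝ)+1)^2*Ctot := by
          rw [hCtot]
          have hCE' : (1:ℝ)*CE ≤ ((n:ℝ)+1)^2*CE := mul_le_mul_of_nonneg_right ht1 hCE0
          have hCg' : (0:ℝ) ≤ ((n:ℝ)+1)^2*Cg^2 := by positivity
          have hbc : (0:ℝ) ≤ ((n:ℝ)+1)^2*(β^2*C₂^2) := by positivity
          have hsq : (1:ℝ) ≤ ((n:ℝ)+1)^2 := ht1
          linarith only [h1, hCE', hCg', hbc, hsq]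
        have h4 : ((n:ℝ)+1)^2 * ((h (s n))^2 * ((n:ℝ)+1)^2) = ((n:ℝ)+1)^4*(h (s n))^2 := by
          ring
        have h3 : ((n:ℝ)+1)^2 * ((h (s n))^2 * ((n:ℝ)+1)^2) ≤ ((n:ℝ)+1)^2 * Ctot := by
          rw [h4]; exact h2
        exact le_of_mul_le_mul_left h3 (by positivity)
      · rw [le_div_iff₀ (by positivity), hCtot]
        have ht4 : (0:ℝ) ≤ ((n:ℝ)+1)^4*(h (s n))^2 := by positivity
        have e1 : ((g₁ (s n))^2 - β^2*(f₂ (s n))^2) * ((n:ℝ)+1)^2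
            = ((n:ℝ)+1)^2*(g₁ (s n))^2 - ((n:ℝ)+1)^2*β^2*(f₂ (s n))^2 := by ring
        rw [e1]
        linarith only [hkey, hEb, ht4, sq_nonneg Cg, mul_nonneg (sq_nonneg β) (sq_nonneg C₂)]
    -- limits
    have hBtend : Tendsto (fun n : ℕ => Ctot/((n:ℝ)+1)^2) atTop (𝓝 0) := by
      have l1 : Tendsto (fun n : ℕ => 1/((n:ℝ)+1)) atTop (𝓝 0) :=
        tendsto_one_div_add_atTop_nhds_zero_nat
      have l2 := (l1.mul l1).const_mul Ctot
      simp only [mul_zero] at l2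
      have heq : (fun n : ℕ => Ctot/((n:ℝ)+1)^2)
          = fun n : ℕ => Ctot * (1/((n:ℝ)+1) * (1/((n:ℝ)+1))) := by
        funext n
        have hne : ((n:ℝ)+1) ≠ 0 := by positivity
        field_simp
      rw [heq]
      exact l2
    have hmono : ∀ n : ℕ, Ctot/((φ n:ℝ)+1)^2 ≤ Ctot/((n:ℝ)+1)^2 := by
      intro n
      have h1 : n ≤ φ n := hφ.le_apply
      have h2 : (n:ℝ) ≤ (φ n : ℝ) := Nat.cast_le.mpr h1
      have h3 : ((n:ℝ)+1)^2 ≤ ((φ n:ℝ)+1)^2 := by nlinarith [Nat.cast_nonneg (α := ℝ) n]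
      exact div_le_div_of_nonneg_left hCtot0.le (by positivity) h3
    have hhu : h u = 0 := by
      have hc : Tendsto (fun n => (h (s (φ n)))^2) atTop (𝓝 ((h u)^2)) := by
        have : Continuous fun v : Fin ρ → ℝ => (h v)^2 :=
          (h.continuous_of_finiteDimensional).pow 2
        exact (this.tendsto u).comp hφt
      have hz : Tendsto (fun n => (h (s (φ n)))^2) atTop (𝓝 0) := by
        refine squeeze_zero (fun n => sq_nonneg _) (fun n => ?_) hBtend
        have := (hball (φ n)).1
        have ht : (0:ℝ) < ((φ n:ℝ)+1)^2 := by positivity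
        have h1 : (h (s (φ n)))^2 ≤ Ctot/((φ n:ℝ)+1)^2 := by
          rw [le_div_iff₀ ht]; linarith [(hball (φ n)).1]
        exact h1.trans (hmono n)
      have := tendsto_nhds_unique hc hz
      exact pow_eq_zero_iff two_ne_zero |>.mp this
    have hGu : (g₁ u)^2 - β^2*(f₂ u)^2 ≤ 0 := by
      have hc : Tendsto (fun n => (g₁ (s (φ n)))^2 - β^2*(f₂ (s (φ n)))^2) atTop
          (𝓝 ((g₁ u)^2 - β^2*(f₂ u)^2)) := by
        have hcont : Continuous fun v : Fin ρ → ℝ => (g₁ v)^2 - β^2*(f₂ v)^2 :=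
          ((g₁.continuous_of_finiteDimensional).pow 2).sub
            (continuous_const.mul ((f₂.continuous_of_finiteDimensional).pow 2))
        exact (hcont.tendsto u).comp hφt
      have hle : ∀ n : ℕ, (g₁ (s (φ n)))^2 - β^2*(f₂ (s (φ n)))^2 ≤ Ctot/((n:ℝ)+1)^2 :=
        fun n => ((hball (φ n)).2).trans (hmono n)
      exact le_of_tendsto_of_tendsto' hc hBtend hle
    have hQu : 0 ≤ Q u := ge_of_tendsto' ((hQcont.tendsto u).comp hφt) fun n => hs4 (φ n)
    have habs : |h u| ≤ η := by rw [hhu]; simp [hη.le]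
    have hf₂u : |f₂ u| ≤ C₂ := hC₂ u hun
    have hg₁f : g₁ u = f₁ u + (N/2) * f₂ u := by simp [hg₁]
    have hQneg : (f₁ u)^2 ≤ η^2 → False := by
      intro hf1
      have habs1 : |f₁ u| ≤ η := aux_abs_le hη hf1
      have := hηQ u hun habs habs1
      linarith
    have hextract : ∀ (Pr : (Fin ρ → ℝ) → Prop), (∃ᶠ n in atTop, Pr (s (φ n))) →
        ∀ (g : (Fin ρ → ℝ) → ℝ), Continuous g → (∀ v, Pr v → 0 ≤ g v) → 0 ≤ g u := by
      intro Pr hf g hgc hPg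
      obtain ⟨σ, hσ, hσP⟩ := Filter.extraction_of_frequently_atTop hf
      have hten : Tendsto (fun n => g (s (φ (σ n)))) atTop (𝓝 (g u)) :=
        (hgc.tendsto u).comp (hφt.comp hσ.tendsto_atTop)
      exact ge_of_tendsto' hten fun n => hPg _ (hσP n)
    have hfreq : (∃ᶠ n in atTop, 0 ≤ f₁ (s (φ n)) * f₂ (s (φ n))) ∨
        (∃ᶠ n in atTop, d*(f₁ (s (φ n)))^2 ≤ (h (s (φ n)))^2) ∨
        (∃ᶠ n in atTop, d*(f₂ (s (φ n)))^2 ≤ (h (s (φ n)))^2) := by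
      by_contra hq
      push_neg at hq
      obtain ⟨q1, q2, q3⟩ := hq
      obtain ⟨n, hn1, hn2, hn3⟩ := ((q1.and (q2.and q3)).exists)
      rcases hs3 (φ n) with hx | hx | hx
      · exact not_le.mpr hn1 hx
      · exact not_le.mpr hn2 hx
      · exact not_le.mpr hn3 hx
    rcases hfreq with hfr | hfr | hfr
    · -- frequently f₁ f₂ ≥ 0
      have hff : 0 ≤ f₁ u * f₂ u := by
        refine hextract (fun v => 0 ≤ f₁ v * f₂ v) hfr (fun v => f₁ v * f₂ v)
          ((f₁.continuous_of_finiteDimensional).mul (f₂.continuous_of_finiteDimensional))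
          (fun v hv => hv)
      apply hQneg
      have hGu' : (f₁ u + (N/2) * f₂ u)^2 - (N/2 + ε)^2*(f₂ u)^2 ≤ 0 := by
        rw [← hg₁f, ← hβ]; exact hGu
      have hsq : (f₁ u)^2 ≤ ε*(N+ε)*(f₂ u)^2 := aux_alg1 hff hN hGu'
      have hf2sq : (f₂ u)^2 ≤ (C₂+1)^2 := aux_sq_bound hf₂u hC₂0
      have h1 : ε*(N+ε)*(f₂ u)^2 ≤ ε*(N+ε)*(C₂+1)^2 :=
        mul_le_mul_of_nonneg_left hf2sq (by positivity)
      calc (f₁ u)^2 ≤ ε*(N+ε)*(f₂ u)^2 := hsq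
        _ ≤ ε*(N+ε)*(C₂+1)^2 := h1
        _ ≤ η^2 := keyε
    · -- frequently d f₁² ≤ h²
      have hle : 0 ≤ (h u)^2 - d*(f₁ u)^2 := by
        refine hextract (fun v => d*(f₁ v)^2 ≤ (h v)^2) hfr (fun v => (h v)^2 - d*(f₁ v)^2)
          (((h.continuous_of_finiteDimensional).pow 2).sub
            (continuous_const.mul ((f₁.continuous_of_finiteDimensional).pow 2)))
          (fun v hv => by show (0:ℝ) ≤ (h v)^2 - d*(f₁ v)^2; linarith [hv])
      rw [hhu] at hle
      have hz : d*(f₁ u)^2 ≤ 0 := by linarith only [hle]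
      have hf1z : f₁ u = 0 := aux_zero hd hz
      apply hQneg
      rw [hf1z]
      simpa using sq_nonneg η
    · -- frequently d f₂² ≤ h²
      have hle : 0 ≤ (h u)^2 - d*(f₂ u)^2 := by
        refine hextract (fun v => d*(f₂ v)^2 ≤ (h v)^2) hfr (fun v => (h v)^2 - d*(f₂ v)^2)
          (((h.continuous_of_finiteDimensional).pow 2).sub
            (continuous_const.mul ((f₂.continuous_of_finiteDimensional).pow 2)))
          (fun v hv => by show (0:ℝ) ≤ (h v)^2 - d*(f₂ v)^2; linarith [hv])
      rw [hhu] at hle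
      have hz : d*(f₂ u)^2 ≤ 0 := by linarith only [hle]
      have hf2z' : f₂ u = 0 := aux_zero hd hz
      have hg1z : (g₁ u)^2 ≤ 0 := by
        rw [hf2z'] at hGu
        simpa using hGu
      have hg1z' : g₁ u = 0 := aux_sqz hg1z
      have hf1z : f₁ u = 0 := by
        rw [hg1z', hf2z'] at hg₁f
        linarith only [hg₁f]
      apply hQneg
      rw [hf1z]
      simpa using sq_nonneg η
  -- final assembly
  obtain ⟨t, ht, hmain⟩ := main
  obtain ⟨Qt, hQtval, hQtsig⟩ := key t (1/t) (1/t^3) ht (by positivity) (by positivity)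
  refine ⟨Qt, hQtsig, ?_, ?_⟩
  · rintro v ⟨hvh, hvcup⟩
    have hvh' : h v = 0 := hvh
    simp only [Set.mem_iUnion, Set.mem_setOf_eq, exists_prop] at hvcup
    obtain ⟨t', ht'mem, hvt'⟩ := hvcup
    obtain ⟨ht'0, ht'N⟩ := ht'mem
    by_cases hv0 : v = 0
    · exact Or.inr (by simp [hv0])
    · left
      show Qt v < 0
      rw [hQtval v, hvh']
      have hgv : g₁ v = f₁ v + (N/2) * f₂ v := by simp [hg₁]
      by_cases hf2 : f₂ v = 0
      · have hf1 : f₁ v = 0 := by rw [hf2] at hvt'; simpa using hvt'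
        have hvW : v ∈ W := by rw [hW]; exact ⟨⟨hvh', hf1⟩, hf2⟩
        have hEv := hEpos v hvW hv0
        rw [hgv, hf1, hf2]
        have h13 : (0:ℝ) < 1/t^3 := by positivity
        have h14 := mul_pos h13 hEv
        linarith only [h14]
      · have hf1 : f₁ v = -t' * f₂ v := by linarith [hvt']
        have hgv2 : g₁ v = (N/2 - t') * f₂ v := by rw [hgv, hf1]; ring
        have hf2sq : 0 < (f₂ v)^2 := sq_pos_of_ne_zero hf2
        have hsq : (g₁ v)^2 < β^2 * (f₂ v)^2 := by
          rw [hgv2, hβ]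
          have h1 : (N/2 - t')^2 < (N/2 + ε)^2 := aux_alg2 ht'0 ht'N hε hN
          rw [mul_pow]
          exact mul_lt_mul_of_pos_right h1 hf2sq
        have hE0v := hE0 v
        have h1t : (0:ℝ) < 1/t := by positivity
        have h13 : (0:ℝ) < 1/t^3 := by positivity
        have h2 := mul_lt_mul_of_pos_left hsq h1t
        have h3 := mul_nonneg h13.le hE0v
        linarith only [h2, h3]
  · rintro v (hv | hv)
    · have hQtv : Qt v < 0 := hv
      by_cases hv0 : v = 0
      · exact Or.inr (Or.inr (by simp [hv0]))
      · by_cases hQv : Q v < 0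
        · exact Or.inr (Or.inl hQv)
        · left
          show f₁ v * f₂ v < 0 ∧ (h v)^2 - d*(f₁ v)^2 < 0 ∧ (h v)^2 - d*(f₂ v)^2 < 0
          by_contra hnot
          have hdisj : 0 ≤ f₁ v * f₂ v ∨ d*(f₁ v)^2 ≤ (h v)^2 ∨ d*(f₂ v)^2 ≤ (h v)^2 := by
            rcases not_and_or.mp hnot with hx | hx
            · exact Or.inl (not_lt.mp hx)
            · rcases not_and_or.mp hx with hy | hy
              · exact Or.inr (Or.inl (by linarith [not_lt.mp hy]))
              · exact Or.inr (Or.inr (by linarith [not_lt.mp hy]))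
          have hvn : 0 < ‖v‖ := norm_pos_iff.mpr hv0
          set c : ℝ := ‖v‖⁻¹ with hc
          have hcpos : 0 < c := by rw [hc]; positivity
          set u : Fin ρ → ℝ := c • v with huu
          have hun : ‖u‖ = 1 := by
            rw [huu, norm_smul, hc]
            simp only [norm_inv, norm_norm]
            field_simp
          have hhv : h u = c * h v := by rw [huu, map_smul]; rfl
          have hf1v : f₁ u = c * f₁ v := by rw [huu, map_smul]; rfl
          have hf2v : f₂ u = c * f₂ v := by rw [huu, map_smul]; rfl
          have hg1v : g₁ u = c * g₁ v := by rw [huu, map_smul]; rfl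
          have hEv : E u = c^2 * E v := by rw [huu, hEsmul]
          have hRv : t*(h v)^2 + (1/t)*(g₁ v)^2 - (1/t)*β^2*(f₂ v)^2 - (1/t^3) * E v < 0 := by
            rw [← hQtval v]; exact hQtv
          have hRu : t*(h u)^2 + (1/t)*(g₁ u)^2 - (1/t)*β^2*(f₂ u)^2 - (1/t^3) * E u < 0 := by
            have heq : t*(h u)^2 + (1/t)*(g₁ u)^2 - (1/t)*β^2*(f₂ u)^2 - (1/t^3) * E u
                = c^2 * (t*(h v)^2 + (1/t)*(g₁ v)^2 - (1/t)*β^2*(f₂ v)^2 - (1/t^3) * E v) := by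
              rw [hhv, hg1v, hf2v, hEv]; ring
            rw [heq]
            exact mul_neg_of_pos_of_neg (by positivity) hRv
          have hdisju : 0 ≤ f₁ u * f₂ u ∨ d*(f₁ u)^2 ≤ (h u)^2 ∨ d*(f₂ u)^2 ≤ (h u)^2 := by
            rcases hdisj with hx | hx | hx
            · left
              rw [hf1v, hf2v]
              have heq : (c * f₁ v) * (c * f₂ v) = c^2 * (f₁ v * f₂ v) := by ring
              rw [heq]
              exact mul_nonneg (sq_nonneg c) hx
            · right; left
              rw [hf1v, hhv]
              have h5 := mul_le_mul_of_nonneg_left hx (sq_nonneg c)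
              linarith only [h5]
            · right; right
              rw [hf2v, hhv]
              have h5 := mul_le_mul_of_nonneg_left hx (sq_nonneg c)
              linarith only [h5]
          have hQu0 : 0 ≤ Q u := by
            rw [huu, hQhom]
            exact mul_nonneg (sq_nonneg c) (not_lt.mp hQv)
          exact absurd (hmain u hun hRu hdisju) (not_lt.mpr hQu0)
    · exact Or.inr (Or.inr hv)
end
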